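/- Let c > 0 be real. On the slit punctured disc Ω, the pair β_c(w) := c·w̄^{c−1}·(1 − w^c)/((1 − |w|^{2c})(1 − w̄^c)) + (1 + w)/((1 − |w|²)(1 + w̄)) and Φ_c(w) := −i·c·w^{c−1}·(1 − |w|²)·(1 + w)(1 − w̄^c)/((1 − |w|^{2c})(1 + w̄)(1 − w^c)), where w̄^c and w̄^{c−1} denote the complex conjugates of w^c and w^{c−1}, satisfies the hyperbolic vortex equations (V1) and (V2) on Ω. (This is the family of singular hyperbolic vortices: for c = 2 it is the standard c₁ = 1 vortex, for c = 5/2 the Forgács–Horváth–Palla c₁ = 3/2 vortex, and in general it has Chern class c₁ = c − 1 and holonomy e^{2πic} around the origin.) -/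

import Mathlib

open Complex ComplexConjugate

noncomputable section

/-- Wirtinger derivative ∂_z f = (1/2)(∂_t f − i ∂_r f). -/
def wdz (f : ℂ → ℂ) (z : ℂ) : ℂ :=
  (2:ℂ)⁻¹ * (fderiv ℝ f z 1 - Complex.I * fderiv ℝ f z Complex.I)

/-- Wirtinger derivative ∂_z̄ f = (1/2)(∂_t f + i ∂_r f). -/
def wdzbar (f : ℂ → ℂ) (z : ℂ) : ℂ :=
  (2:ℂ)⁻¹ * (fderiv ℝ f z 1 + Complex.I * fderiv ℝ f z Complex.I)

/-- A real-valued function regarded as complex-valued. -/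
def cre (φ : ℂ → ℝ) : ℂ → ℂ := fun z => (φ z : ℂ)

/-- ∂_z log φ := (∂_z φ)/φ for positive real φ. -/
def dzlog (φ : ℂ → ℝ) (z : ℂ) : ℂ := wdz (cre φ) z / (φ z : ℂ)

/-- ∂_z̄ log φ := (∂_z̄ φ)/φ for positive real φ. -/
def dzbarlog (φ : ℂ → ℝ) (z : ℂ) : ℂ := wdzbar (cre φ) z / (φ z : ℂ)

/-- Flat Laplacian ∂_t² + ∂_r² on ℂ ≅ ℝ², where z = t + ir. -/
def lap2 (φ : ℂ → ℝ) (z : ℂ) : ℝ :=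
  fderiv ℝ (fun w => fderiv ℝ φ w 1) z 1 +
  fderiv ℝ (fun w => fderiv ℝ φ w Complex.I) z Complex.I

/-- The slit punctured disc: the open unit disc minus the origin and the nonnegative
real axis. -/
def Omega : Set ℂ :=
  {w : ℂ | 0 < ‖w‖ ∧ ‖w‖ < 1 ∧ ¬(w.im = 0 ∧ 0 ≤ w.re)}

/-- The argument normalized to lie in (0, 2π) (on Ω). -/
def argTwoPi (w : ℂ) : ℝ := if 0 < w.arg then w.arg else w.arg + 2 * Real.pi

/-- The branch of the complex logarithm on Ω with argument in (0, 2π). -/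
def Lbr (w : ℂ) : ℂ := (Real.log (‖w‖) : ℂ) + (argTwoPi w : ℂ) * Complex.I

/-- w^c := exp(c·L(w)) for the branch L with argument in (0, 2π). -/
def wpow (c : ℝ) (w : ℂ) : ℂ := Complex.exp ((c : ℂ) * Lbr w)

/-- The super-potential φ_c(w) = (1 − |w|^{2c})/|1 − w^c|². -/
def phiC (c : ℝ) (w : ℂ) : ℝ :=
  (1 - ‖w‖ ^ (2*c)) / Complex.normSq (1 - wpow c w)
/-- The connection coefficient β_c of the singular hyperbolic vortex family. -/
def beta18 (c : ℝ) (w : ℂ) : ℂ :=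
  (c : ℂ) * conj (wpow (c-1) w) * (1 - wpow c w) /
      (((1 - ‖w‖ ^ (2*c) : ℝ) : ℂ) * (1 - conj (wpow c w))) +
    (1 + w) / (((1 - Complex.normSq w : ℝ) : ℂ) * (1 + conj w))

/-- The Higgs field Φ_c of the singular hyperbolic vortex family. -/
def higgs18 (c : ℝ) (w : ℂ) : ℂ :=
  -Complex.I * (c : ℂ) * wpow (c-1) w * ((1 - Complex.normSq w : ℝ) : ℂ) *
      (1 + w) * (1 - conj (wpow c w)) /
    (((1 - ‖w‖ ^ (2*c) : ℝ) : ℂ) * (1 + conj w) * (1 - wpow c w))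

namespace SV


def LM (a b : ℂ) : ℂ →L[ℝ] ℂ :=
  a • (ContinuousLinearMap.id ℝ ℂ) + b • (Complex.conjCLE.toContinuousLinearMap : ℂ →L[ℝ] ℂ)

@[simp] lemma LM_apply (a b z : ℂ) : LM a b z = a * z + b * conj z := by
  simp [LM, Complex.conjCLE]

def HasWirt (f : ℂ → ℂ) (w a b : ℂ) : Prop := HasFDerivAt f (LM a b) w

lemma HasWirt.wdz_eq {f : ℂ → ℂ} {w a b : ℂ} (h : HasWirt f w a b) : wdz f w = a := by
  have := h.fderiv
  simp only [wdz, this, LM_apply]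
  simp [Complex.conj_I]
  ring_nf
  simp [Complex.I_sq]
  ring

lemma HasWirt.wdzbar_eq {f : ℂ → ℂ} {w a b : ℂ} (h : HasWirt f w a b) : wdzbar f w = b := by
  have := h.fderiv
  simp only [wdzbar, this, LM_apply]
  simp [Complex.conj_I]
  ring_nf
  simp [Complex.I_sq]
  ring

lemma hasWirt_const (w k : ℂ) : HasWirt (fun _ => k) w 0 0 := by
  have : LM 0 0 = 0 := by ext z; simp
  unfold HasWirt; rw [this]; exact hasFDerivAt_const k w

lemma hasWirt_id (w : ℂ) : HasWirt (fun z => z) w 1 0 := by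
  have : LM 1 0 = ContinuousLinearMap.id ℝ ℂ := by ext z; simp
  unfold HasWirt; rw [this]; exact hasFDerivAt_id w

lemma hasWirt_conj (w : ℂ) : HasWirt (fun z => conj z) w 0 1 := by
  have : LM 0 1 = (Complex.conjCLE.toContinuousLinearMap : ℂ →L[ℝ] ℂ) := by ext z; simp
  unfold HasWirt; rw [this]
  exact Complex.conjCLE.hasFDerivAt

lemma HasWirt.add {f g : ℂ → ℂ} {w a b a' b' : ℂ} (hf : HasWirt f w a b)
    (hg : HasWirt g w a' b') : HasWirt (fun z => f z + g z) w (a + a') (b + b') := by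
  have : LM (a+a') (b+b') = LM a b + LM a' b' := by ext z; simp; ring
  unfold HasWirt at *; rw [this]; exact hf.add hg

lemma HasWirt.sub {f g : ℂ → ℂ} {w a b a' b' : ℂ} (hf : HasWirt f w a b)
    (hg : HasWirt g w a' b') : HasWirt (fun z => f z - g z) w (a - a') (b - b') := by
  have : LM (a-a') (b-b') = LM a b - LM a' b' := by ext z; simp; ring
  unfold HasWirt at *; rw [this]; exact hf.sub hg

lemma HasWirt.mul {f g : ℂ → ℂ} {w a b a' b' : ℂ} (hf : HasWirt f w a b)
    (hg : HasWirt g w a' b') :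
    HasWirt (fun z => f z * g z) w (a * g w + f w * a') (b * g w + f w * b') := by
  have h := HasFDerivAt.mul' hf hg
  unfold HasWirt
  refine h.congr_fderiv ?_
  ext z
  simp [ContinuousLinearMap.smulRight_apply]
  ring

lemma HasWirt.comp_holo {f : ℂ → ℂ} {g : ℂ → ℂ} {w a b g' : ℂ}
    (hf : HasWirt f w a b) (hg : HasDerivAt g g' (f w)) :
    HasWirt (fun z => g (f z)) w (g' * a) (g' * b) := by
  have hg2 : HasFDerivAt g ((ContinuousLinearMap.smulRight (1 : ℂ →L[ℂ] ℂ) g').restrictScalars ℝ) (f w) :=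
    (hg.hasFDerivAt).restrictScalars ℝ
  have h := hg2.comp w hf
  unfold HasWirt
  refine h.congr_fderiv ?_
  ext z
  simp
  ring

lemma hasWirt_of_deriv {f : ℂ → ℂ} {w f' : ℂ} (h : HasDerivAt f f' w) :
    HasWirt f w f' 0 := by
  have := (hasWirt_id w).comp_holo h
  simpa using this

lemma hasWirt_conj_of_deriv {f : ℂ → ℂ} {w f' : ℂ} (h : HasDerivAt f f' w) :
    HasWirt (fun z => conj (f z)) w 0 (conj f') := by
  have h1 : HasWirt f w f' 0 := hasWirt_of_deriv h
  have h2 := (Complex.conjCLE.hasFDerivAt (x := f w)).comp w h1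
  unfold HasWirt at *
  refine h2.congr_fderiv ?_
  ext z
  simp [Complex.conjCLE]

lemma HasWirt.inv {f : ℂ → ℂ} {w a b : ℂ} (hf : HasWirt f w a b) (h0 : f w ≠ 0) :
    HasWirt (fun z => (f z)⁻¹) w (-(a / (f w)^2)) (-(b / (f w)^2)) := by
  have hg : HasDerivAt (fun z : ℂ => z⁻¹) (-(f w)^(-2:ℤ)) (f w) := hasDerivAt_inv h0
  have := hf.comp_holo hg
  have h2 : (f w)^2 ≠ 0 := pow_ne_zero _ h0
  convert this using 1 <;>
  · rw [zpow_neg, neg_mul, neg_inj, eq_comm, inv_mul_eq_div]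
    rw [zpow_two, pow_two]

lemma HasWirt.congr {f g : ℂ → ℂ} {w a b : ℂ} (hg : HasWirt g w a b)
    (h : f =ᶠ[nhds w] g) : HasWirt f w a b :=
  HasFDerivAt.congr_of_eventuallyEq hg h

lemma HasWirt.div {f g : ℂ → ℂ} {w a b a' b' : ℂ} (hf : HasWirt f w a b)
    (hg : HasWirt g w a' b') (h0 : g w ≠ 0) :
    HasWirt (fun z => f z / g z) w ((a * g w - f w * a') / (g w)^2)
      ((b * g w - f w * b') / (g w)^2) := by
  have h := hf.mul (hg.inv h0)
  have heq : (fun z => f z * (g z)⁻¹) = fun z => f z / g z := by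
    funext z; rw [div_eq_mul_inv]
  rw [heq] at h
  convert h using 1 <;> · field_simp; ring


def Om' : Set ℂ := {w : ℂ | ¬(w.im = 0 ∧ 0 ≤ w.re)}

lemma mem_Om'_iff {w : ℂ} : w ∈ Om' ↔ -w ∈ Complex.slitPlane := by
  simp only [Om', Set.mem_setOf_eq, Complex.mem_slitPlane_iff, Complex.neg_re, Complex.neg_im]
  constructor
  · intro h
    by_cases him : w.im = 0
    · left; push_neg at h; linarith [h him]
    · right; simpa using him
  · rintro (h | h) h2
    · linarith [h2.2]
    · exact h (by simp [h2.1])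

lemma isOpen_Om' : IsOpen Om' := by
  have : Om' = (fun w : ℂ => -w) ⁻¹' Complex.slitPlane := by
    ext w; simpa using mem_Om'_iff
  rw [this]
  exact Complex.isOpen_slitPlane.preimage continuous_neg

lemma ne_zero_of_mem_Om' {w : ℂ} (hw : w ∈ Om') : w ≠ 0 := by
  rintro rfl; exact hw ⟨rfl, le_refl 0⟩

lemma Lbr_eq {w : ℂ} (hw : w ∈ Om') : Lbr w = Complex.log (-w) + Real.pi * Complex.I := by
  have hw0 : w ≠ 0 := ne_zero_of_mem_Om' hw
  have habs : ‖-w‖ = ‖w‖ := by simp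
  rw [Complex.log, habs]
  unfold Lbr argTwoPi
  rcases lt_trichotomy w.im 0 with him | him | him
  · have harg : (-w).arg = w.arg + Real.pi := Complex.arg_neg_eq_arg_add_pi_of_im_neg him
    have hneg : ¬ (0 < w.arg) := by
      simp only [not_lt]
      exact le_of_lt (Complex.arg_neg_iff.mpr him)
    rw [if_neg hneg, harg]
    push_cast
    ring
  · have hre : w.re < 0 := by
      by_contra h
      exact hw ⟨him, not_lt.mp h⟩
    have harg : w.arg = Real.pi := Complex.arg_eq_pi_iff.mpr ⟨hre, him⟩
    have harg2 : (-w).arg = 0 := Complex.arg_eq_zero_iff.mpr ⟨by simp; linarith, by simp [him]⟩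
    rw [if_pos (by rw [harg]; exact Real.pi_pos), harg, harg2]
    push_cast
    ring
  · have harg : (-w).arg = w.arg - Real.pi := Complex.arg_neg_eq_arg_sub_pi_of_im_pos him
    have hpos : 0 < w.arg := by
      rcases (Complex.arg_nonneg_iff.mpr (le_of_lt him)).lt_or_eq with h | h
      · exact h
      · exfalso
        have := (Complex.arg_eq_zero_iff.mp h.symm).2
        linarith
    rw [if_pos hpos, harg]
    push_cast
    ring

lemma exp_Lbr {w : ℂ} (hw : w ∈ Om') : Complex.exp (Lbr w) = w := by
  rw [Lbr_eq hw, Complex.exp_add, Complex.exp_log (neg_ne_zero.mpr (ne_zero_of_mem_Om' hw)),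
    Complex.exp_pi_mul_I]
  ring

lemma hasDerivAt_wpow (a : ℝ) {w : ℂ} (hw : w ∈ Om') :
    HasDerivAt (wpow a) ((a : ℂ) * wpow a w / w) w := by
  have hw0 : w ≠ 0 := ne_zero_of_mem_Om' hw
  have hmem : -w ∈ Complex.slitPlane := mem_Om'_iff.mp hw
  have h1 : HasDerivAt (fun z : ℂ => -z) (-1) w := (hasDerivAt_id w).neg
  have h2 : HasDerivAt (fun z : ℂ => Complex.log (-z)) ((-w)⁻¹ * (-1)) w :=
    (Complex.hasDerivAt_log hmem).comp w h1
  have h3 : HasDerivAt (fun z : ℂ => (a:ℂ) * (Complex.log (-z) + Real.pi * Complex.I))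
      ((a:ℂ) * ((-w)⁻¹ * (-1))) w := ((h2.add_const _).const_mul _)
  have h4 := h3.cexp
  have heq : (fun z : ℂ => Complex.exp ((a:ℂ) * (Complex.log (-z) + Real.pi * Complex.I)))
      =ᶠ[nhds w] wpow a := by
    filter_upwards [isOpen_Om'.mem_nhds hw] with z hz
    rw [wpow, Lbr_eq hz]
  have h5 := h4.congr_of_eventuallyEq heq.symm
  refine h5.congr_deriv ?_
  rw [wpow, Lbr_eq hw]
  field_simp

lemma wpow_sub_one (c : ℝ) {w : ℂ} (hw : w ∈ Om') : wpow (c - 1) w = wpow c w / w := by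
  have := exp_Lbr hw
  rw [wpow, wpow, eq_div_iff (ne_zero_of_mem_Om' hw)]
  calc Complex.exp (((c:ℝ) - 1 : ℝ) * Lbr w) * w
      = Complex.exp (((c:ℂ) - 1) * Lbr w) * Complex.exp (Lbr w) := by rw [this]; push_cast; ring_nf
    _ = Complex.exp ((c:ℂ) * Lbr w) := by rw [← Complex.exp_add]; ring_nf

lemma normSq_wpow (a : ℝ) {w : ℂ} (hw0 : w ≠ 0) :
    (Complex.normSq (wpow a w) : ℝ) = ‖w‖ ^ (2 * a) := by
  have habs : 0 < ‖w‖ := by simpa using hw0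
  have h1 : ‖wpow a w‖ = Real.exp (a * Real.log (‖w‖)) := by
    rw [wpow, Complex.norm_exp]
    congr 1
    simp [Lbr, Complex.mul_re]
  rw [Complex.normSq_eq_norm_sq, h1, Real.rpow_def_of_pos habs, ← Real.exp_nat_mul]
  ring_nf

lemma abs_lt_one_facts {w : ℂ} (c : ℝ) (hc : 0 < c) (habs : 0 < ‖w‖)
    (hlt : ‖w‖ < 1) : ‖w‖ ^ (2*c) < 1 :=
  Real.rpow_lt_one (norm_nonneg w) hlt (by linarith)

lemma cast_one_sub_abs (c : ℝ) {z : ℂ} (hz : z ≠ 0) :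
    ((1 - ‖z‖ ^ (2*c) : ℝ) : ℂ) = 1 - wpow c z * conj (wpow c z) := by
  rw [Complex.mul_conj, ← normSq_wpow c hz]
  push_cast
  ring

lemma cast_one_sub_normSq (z : ℂ) :
    ((1 - Complex.normSq z : ℝ) : ℂ) = 1 - z * conj z := by
  rw [Complex.mul_conj]
  push_cast
  ring

lemma wpow_ne_one {c : ℝ} (hc : 0 < c) {w : ℂ} (habs : 0 < ‖w‖)
    (hlt : ‖w‖ < 1) : wpow c w ≠ 1 := by
  have hw0 : w ≠ 0 := by simpa using habs.ne'
  intro h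
  have h1 : Complex.normSq (wpow c w) = 1 := by rw [h]; simp
  rw [normSq_wpow c hw0] at h1
  have := Real.rpow_lt_one (norm_nonneg w) hlt (by linarith : (0:ℝ) < 2*c)
  linarith

end SV

set_option maxHeartbeats 1000000 in
/-- The singular hyperbolic vortex family (β_c, Φ_c) satisfies the hyperbolic vortex
equations (V1) ∂_w̄Φ + βΦ = 0 and (V2) (1−|w|²)²·Re(∂_w β) = 1 − |Φ|² on the slit
punctured disc Ω. -/
theorem singular_vortex_family (c : ℝ) (hc : 0 < c) :
    ∀ w ∈ Omega,
      wdzbar (higgs18 c) w + beta18 c w * higgs18 c w = 0 ∧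
      (1 - Complex.normSq w)^2 * (wdz (beta18 c) w).re =
        1 - Complex.normSq (higgs18 c w) := by
  intro w hw
  obtain ⟨habs, hlt, hslit⟩ := hw
  have hOm : w ∈ SV.Om' := hslit
  have hw0 : w ≠ 0 := SV.ne_zero_of_mem_Om' hOm
  have hv0 : conj w ≠ 0 := by simpa using hw0
  have h1p : (1 : ℂ) - wpow c w ≠ 0 := sub_ne_zero.mpr (Ne.symm (SV.wpow_ne_one hc habs hlt))
  have h1q : (1 : ℂ) - conj (wpow c w) ≠ 0 := by
    intro hh
    apply h1p
    have h2 := congrArg (starRingEnd ℂ) hh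
    simpa using h2
  have h1u : (1 : ℂ) + w ≠ 0 := by
    intro h
    have hw1 : w = -1 := by linear_combination h
    rw [hw1] at hlt
    simp at hlt
  have h1v : (1 : ℂ) + conj w ≠ 0 := by
    intro hh
    apply h1u
    have h2 := congrArg (starRingEnd ℂ) hh
    simpa using h2
  have hmlt : ‖w‖ ^ (2*c) < 1 := SV.abs_lt_one_facts c hc habs hlt
  have hm0 : (1 : ℝ) - ‖w‖ ^ (2*c) ≠ 0 := by linarith
  have hnlt : Complex.normSq w < 1 := by
    rw [Complex.normSq_eq_norm_sq]
    nlinarith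
  have hn0 : (1 : ℝ) - Complex.normSq w ≠ 0 := by linarith
  have h1pq : (1 : ℂ) - wpow c w * conj (wpow c w) ≠ 0 := by
    rw [← SV.cast_one_sub_abs c hw0]
    exact Complex.ofReal_ne_zero.mpr hm0
  have h1uv : (1 : ℂ) - w * conj w ≠ 0 := by
    rw [← SV.cast_one_sub_normSq]
    exact Complex.ofReal_ne_zero.mpr hn0
  have hr : wpow (c-1) w = wpow c w / w := SV.wpow_sub_one c hOm
  have hrc : conj (wpow (c-1) w) = conj (wpow c w) / conj w := by rw [hr, map_div₀]
  have hns : ((Complex.normSq w : ℝ) : ℂ) = w * conj w := (Complex.mul_conj w).symm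
  have hab : ((‖w‖ ^ (2*c) : ℝ) : ℂ) = wpow c w * conj (wpow c w) := by
    rw [Complex.mul_conj]
    exact_mod_cast congrArg Complex.ofReal (SV.normSq_wpow c hw0).symm
  -- HasWirt building blocks
  have hWp : SV.HasWirt (wpow c) w ((c:ℂ) * wpow c w / w) 0 :=
    SV.hasWirt_of_deriv (SV.hasDerivAt_wpow c hOm)
  have hWr : SV.HasWirt (wpow (c-1)) w (((c-1 : ℝ):ℂ) * wpow (c-1) w / w) 0 :=
    SV.hasWirt_of_deriv (SV.hasDerivAt_wpow (c-1) hOm)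
  have hWq : SV.HasWirt (fun z => conj (wpow c z)) w 0 (conj ((c:ℂ) * wpow c w / w)) :=
    SV.hasWirt_conj_of_deriv (SV.hasDerivAt_wpow c hOm)
  have hWs : SV.HasWirt (fun z => conj (wpow (c-1) z)) w 0
      (conj (((c-1 : ℝ):ℂ) * wpow (c-1) w / w)) :=
    SV.hasWirt_conj_of_deriv (SV.hasDerivAt_wpow (c-1) hOm)
  have hW1uv := (SV.hasWirt_const w 1).sub ((SV.hasWirt_id w).mul (SV.hasWirt_conj w))
  have hW1pu := (SV.hasWirt_const w 1).add (SV.hasWirt_id w)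
  have hW1q := (SV.hasWirt_const w 1).sub hWq
  have hW1pq := (SV.hasWirt_const w 1).sub (hWp.mul hWq)
  have hW1cv := (SV.hasWirt_const w 1).add (SV.hasWirt_conj w)
  have hW1p := (SV.hasWirt_const w 1).sub hWp
  -- the Higgs field
  have hPhiEv : higgs18 c =ᶠ[nhds w] (fun z =>
      -Complex.I * (c : ℂ) * wpow (c-1) z * (1 - z * conj z) * (1 + z) *
        (1 - conj (wpow c z)) /
      ((1 - wpow c z * conj (wpow c z)) * (1 + conj z) * (1 - wpow c z))) := by
    filter_upwards [isOpen_compl_singleton.mem_nhds hw0] with z hz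
    have hz0 : z ≠ 0 := hz
    simp only [higgs18, SV.cast_one_sub_abs c hz0, SV.cast_one_sub_normSq]
  have hWH : SV.HasWirt (higgs18 c) w _ _ :=
    (SV.HasWirt.div
      (((((SV.hasWirt_const w (-Complex.I * (c:ℂ))).mul hWr).mul hW1uv).mul hW1pu).mul hW1q)
      ((hW1pq.mul hW1cv).mul hW1p)
      (mul_ne_zero (mul_ne_zero h1pq h1v) h1p)).congr hPhiEv
  -- the connection coefficient
  have hBetaEv : beta18 c =ᶠ[nhds w] (fun z =>
      (c : ℂ) * conj (wpow (c-1) z) * (1 - wpow c z) /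
        ((1 - wpow c z * conj (wpow c z)) * (1 - conj (wpow c z))) +
      (1 + z) / ((1 - z * conj z) * (1 + conj z))) := by
    filter_upwards [isOpen_compl_singleton.mem_nhds hw0] with z hz
    have hz0 : z ≠ 0 := hz
    simp only [beta18, SV.cast_one_sub_abs c hz0, SV.cast_one_sub_normSq]
  have hWB : SV.HasWirt (beta18 c) w _ _ :=
    ((SV.HasWirt.div (((SV.hasWirt_const w ((c:ℂ))).mul hWs).mul hW1p) (hW1pq.mul hW1q)
        (mul_ne_zero h1pq h1q)).add
      (SV.HasWirt.div hW1pu (hW1uv.mul hW1cv) (mul_ne_zero h1uv h1v))).congr hBetaEv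
  have hBetaVal : beta18 c w =
      (c : ℂ) * conj (wpow (c-1) w) * (1 - wpow c w) /
        ((1 - wpow c w * conj (wpow c w)) * (1 - conj (wpow c w))) +
      (1 + w) / ((1 - w * conj w) * (1 + conj w)) := by
    simp only [beta18, SV.cast_one_sub_abs c hw0, SV.cast_one_sub_normSq]
  have hPhiVal : higgs18 c w =
      -Complex.I * (c : ℂ) * wpow (c-1) w * (1 - w * conj w) * (1 + w) *
        (1 - conj (wpow c w)) /
      ((1 - wpow c w * conj (wpow c w)) * (1 + conj w) * (1 - wpow c w)) := by
    simp only [higgs18, SV.cast_one_sub_abs c hw0, SV.cast_one_sub_normSq]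
  constructor
  · -- V1
    rw [hWH.wdzbar_eq, hBetaVal, hPhiVal]
    beta_reduce
    simp only [zero_mul, mul_zero, add_zero, zero_add, one_mul, mul_one, sub_zero, zero_sub,
      zero_div, neg_zero, neg_neg]
    simp only [hrc]
    simp only [hr]
    simp only [map_div₀, map_mul, Complex.conj_ofReal, Complex.ofReal_sub, Complex.ofReal_one]
    field_simp [hw0, hv0, h1p, h1q, h1u, h1v, h1pq, h1uv]
    have hD : (starRingEnd ℂ) w * ((1 - wpow c w * (starRingEnd ℂ) (wpow c w)) * (1 - (starRingEnd ℂ) (wpow c w))) *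
        ((1 - w * (starRingEnd ℂ) w) * (1 + (starRingEnd ℂ) w)) *
        (w * ((1 - wpow c w * (starRingEnd ℂ) (wpow c w)) * (1 + (starRingEnd ℂ) w) * (1 - wpow c w))) ≠ 0 := by
      exact mul_ne_zero (mul_ne_zero (mul_ne_zero hv0 (mul_ne_zero h1pq h1q)) (mul_ne_zero h1uv h1v))
        (mul_ne_zero hw0 (mul_ne_zero (mul_ne_zero h1pq h1v) h1p))
    ring
  · -- V2
    have hX : wdz (beta18 c) w =
        ((1/(1 - Complex.normSq w)^2 - c^2 * ‖w‖ ^ (2*c) /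
          (Complex.normSq w * (1 - ‖w‖ ^ (2*c))^2) : ℝ) : ℂ) := by
      rw [hWB.wdz_eq]
      beta_reduce
      try simp only [hrc]
      try simp only [hr]
      simp only [map_div₀, map_mul, Complex.conj_ofReal, Complex.ofReal_sub, Complex.ofReal_div,
        Complex.ofReal_one, Complex.ofReal_mul, Complex.ofReal_pow]
      rw [hns, hab]
      simp only [zero_mul, mul_zero, add_zero, zero_add, one_mul, mul_one, sub_zero, zero_sub,
        zero_div, neg_zero, neg_neg]
      field_simp [hw0, hv0, h1p, h1q, h1u, h1v, h1pq, h1uv]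
      have h1qp : (1:ℂ) - conj (wpow c w) * wpow c w ≠ 0 := by rwa [mul_comm] at h1pq
      have h1vu : (1:ℂ) - conj w * w ≠ 0 := by rwa [mul_comm] at h1uv
      field_simp
      ring
    rw [hX, Complex.ofReal_re, ← Complex.ofReal_inj]
    simp only [Complex.ofReal_sub, Complex.ofReal_div, Complex.ofReal_one, Complex.ofReal_mul,
      Complex.ofReal_pow]
    rw [hns, hab, show ((Complex.normSq (higgs18 c w) : ℝ) : ℂ) =
      higgs18 c w * conj (higgs18 c w) from (Complex.mul_conj _).symm, hPhiVal]
    simp only [map_div₀, map_mul, map_sub, map_add, map_one, map_neg, Complex.conj_conj,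
      Complex.conj_I, Complex.conj_ofReal]
    try simp only [hrc]
    try simp only [hr]
    field_simp [hw0, hv0, h1p, h1q, h1u, h1v, h1pq, h1uv]
    have hD2 : w * ((1 - wpow c w * (starRingEnd ℂ) (wpow c w)) * (1 + (starRingEnd ℂ) w) * (1 - wpow c w)) *
        ((starRingEnd ℂ) w * ((1 - (starRingEnd ℂ) (wpow c w) * wpow c w) * (1 + w) * (1 - (starRingEnd ℂ) (wpow c w)))) ≠ 0 := by
      have h1qp : (1 : ℂ) - (starRingEnd ℂ) (wpow c w) * wpow c w ≠ 0 := by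
        rwa [mul_comm] at h1pq
      exact mul_ne_zero (mul_ne_zero hw0 (mul_ne_zero (mul_ne_zero h1pq h1v) h1p))
        (mul_ne_zero hv0 (mul_ne_zero (mul_ne_zero h1qp h1u) h1q))
    ring_nf
    simp only [Complex.I_sq]
    ring
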